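/- arXiv:math/0606649 — 2 statements merged into one kernel-verified Lean document; each statement's English description precedes it below -/
import Mathlib

section
/- Let N ⊆ M be von Neumann algebras and U = (A_{ij}) a unitary in M ⊗̄ B(K) written as an operator matrix with entries A_{ij} ∈ M. Then U(N ⊗̄ B(K))U* = N ⊗̄ B(K) if and only if A_i X A_j* ∈ N and A_i* X A_j ∈ N for all X ∈ N and all matrix entries A_i, A_j of U. -/
open TopologicalSpace

noncomputable section

namespace VNPaper

variable {H : Type*} [NormedAddCommGroup H] [InnerProductSpace ℂ H] [CompleteSpace H]

/-- A unitary operator on `H`. -/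
def IsUnitaryOp (U : H →L[ℂ] H) : Prop := U * star U = 1 ∧ star U * U = 1

/-- Image of a set of operators under conjugation `x ↦ U x U*`. -/
def conjSet (U : H →L[ℂ] H) (S : Set (H →L[ℂ] H)) : Set (H →L[ℂ] H) :=
  (fun x => U * x * star U) '' S

/-- `N` is singular in `M`: the only unitaries of `M` normalizing `N` lie in `N`. -/
def SingularIn (N M : Set (H →L[ℂ] H)) : Prop :=
  ∀ U ∈ M, IsUnitaryOp U → conjSet U N = N → U ∈ N

/-- The unitary normalizer of `N` in `M`. -/
def normalizerSet (N M : Set (H →L[ℂ] H)) : Set (H →L[ℂ] H) :=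
  {U | U ∈ M ∧ IsUnitaryOp U ∧ conjSet U N = N}

/-- Partial isometry. -/
def IsPartialIsom (V : H →L[ℂ] H) : Prop := V * star V * V = V

/-- Projection (self-adjoint idempotent). -/
def IsProjOp (p : H →L[ℂ] H) : Prop := IsSelfAdjoint p ∧ p * p = p

/-- Compression `E S E` of a set of operators. -/
def compress (E : H →L[ℂ] H) (S : Set (H →L[ℂ] H)) : Set (H →L[ℂ] H) :=
  (fun x => E * x * E) '' S

/-- The normalizing groupoid of `N` in `M`: partial isometries `V ∈ M` with initial and final
projections `E, F ∈ N` such that `V (E N E) V* = F N F`. -/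
def groupoidSet (N M : Set (H →L[ℂ] H)) : Set (H →L[ℂ] H) :=
  {V | V ∈ M ∧ IsPartialIsom V ∧ star V * V ∈ N ∧ V * star V ∈ N ∧
    conjSet V (compress (star V * V) N) = compress (V * star V) N}

/-- The von Neumann algebra generated by a set of operators (double commutant). -/
def gen (S : Set (H →L[ℂ] H)) : Set (H →L[ℂ] H) :=
  Set.centralizer (Set.centralizer S)

/-- `N` is regular in `M`: the normalizer of `N` in `M` generates `M`. -/
def RegularIn (N M : Set (H →L[ℂ] H)) : Prop :=
  gen (normalizerSet N M) = M

/-- The Hilbert space `ℓ²(ι, H) = H ⊗ ℓ²(ι)`. -/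
abbrev l2 (ι : Type*) (H : Type*) [NormedAddCommGroup H] [InnerProductSpace ℂ H] :=
  lp (fun _ : ι => H) 2

/-- The `(i,j)` matrix entry of an operator on `ℓ²(ι, H)`. -/
def entry {ι : Type*} (T : l2 ι H →L[ℂ] l2 ι H) (i j : ι) : H →L[ℂ] H :=
  letI : DecidableEq ι := Classical.decEq ι
  LinearMap.mkContinuous
    { toFun := fun h => T (lp.single 2 j h) i
      map_add' := fun a b => by
        have hs : lp.single (E := fun _ : ι => H) 2 j (a + b)
            = lp.single 2 j a + lp.single 2 j b := by
          apply lp.ext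
          funext k
          by_cases hk : k = j
          · subst hk
            simp [lp.single_apply_self]
          · simp [lp.single_apply_ne _ _ _ hk]
        dsimp only
        rw [hs, map_add]
        rfl
      map_smul' := fun c a => by
        dsimp only
        rw [show lp.single (E := fun _ : ι => H) 2 j (c • a) = c • lp.single 2 j a from
          lp.single_smul (E := fun _ : ι => H) 2 j c a, map_smul]
        rfl }
    ‖T‖
    (fun h => by
      calc ‖T (lp.single 2 j h) i‖ ≤ ‖T (lp.single 2 j h)‖ :=
            lp.norm_apply_le_norm (by norm_num) _ i
        _ ≤ ‖T‖ * ‖lp.single (E := fun _ : ι => H) 2 j h‖ := T.le_opNorm _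
        _ = ‖T‖ * ‖h‖ := by
            rw [show ‖lp.single (E := fun _ : ι => H) 2 j h‖ = ‖h‖ from
              lp.norm_single (E := fun _ : ι => H) (p := 2) (by norm_num) j h])

/-- The model of `S ⊗̄ B(ℓ²(ι))` inside `B(ℓ²(ι, H))`: operators all of whose matrix
entries lie in `S`. -/
def tensorB (S : Set (H →L[ℂ] H)) (ι : Type*) : Set (l2 ι H →L[ℂ] l2 ι H) :=
  {T | ∀ i j, entry T i j ∈ S}

/-- `N` is completely singular in `M`: `N ⊗̄ B(K)` is singular in `M ⊗̄ B(K)` for every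
Hilbert space `K` (modelled as `ℓ²(ι)` over all index types `ι`). -/
def CompletelySingularIn (N M : Set (H →L[ℂ] H)) : Prop :=
  ∀ ι : Type, SingularIn (tensorB N ι) (tensorB M ι)

/-- A finite von Neumann algebra: every isometry in it is a unitary. -/
def IsFiniteVN (M : Set (H →L[ℂ] H)) : Prop :=
  ∀ V ∈ M, star V * V = 1 → V * star V = 1

/-- A factor: trivial center. -/
def IsFactorVN (M : Set (H →L[ℂ] H)) : Prop :=
  ∀ x ∈ M, (∀ y ∈ M, x * y = y * x) → ∃ c : ℂ, x = c • (1 : H →L[ℂ] H)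

/-- Abelian set of operators. -/
def IsAbelianSet (S : Set (H →L[ℂ] H)) : Prop :=
  ∀ x ∈ S, ∀ y ∈ S, x * y = y * x

/-- A type II₁ factor: an infinite-dimensional finite factor. -/
def IsII1Factor (M : VonNeumannAlgebra H) : Prop :=
  IsFiniteVN (M : Set (H →L[ℂ] H)) ∧ IsFactorVN (M : Set (H →L[ℂ] H)) ∧
    ¬ ∃ (s : Finset (H →L[ℂ] H)), (↑s ⊆ (M : Set (H →L[ℂ] H))) ∧
        ∀ x ∈ (M : Set (H →L[ℂ] H)), x ∈ Submodule.span ℂ (↑s : Set (H →L[ℂ] H))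

/-- Countably decomposable: every orthogonal family of nonzero projections is countable. -/
def CountablyDecomposable (N : Set (H →L[ℂ] H)) : Prop :=
  ∀ S : Set (H →L[ℂ] H), (∀ p ∈ S, p ∈ N ∧ IsProjOp p ∧ p ≠ 0) →
    (S.Pairwise fun p q => p * q = 0) → S.Countable

/-- Properly infinite: every nonzero central projection `z` of `N` is infinite, i.e. `z` is
Murray–von Neumann equivalent in `N` to a proper subprojection of itself. -/
def ProperlyInfinite (N : Set (H →L[ℂ] H)) : Prop :=
  ∀ z ∈ N, IsProjOp z → z ≠ 0 → (∀ y ∈ N, z * y = y * z) →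
    ∃ v ∈ N, star v * v = z ∧ z * v = v ∧ v * star v ≠ z

/-- Basic-neighbourhood description of the strong-operator closure of a set of operators. -/
def sotClosure (S : Set (H →L[ℂ] H)) : Set (H →L[ℂ] H) :=
  {T | ∀ ε : ℝ, 0 < ε → ∀ F : Finset H, ∃ X ∈ S, ∀ h ∈ F, ‖(T - X) h‖ < ε}

/-- `E` is the projection onto the closure of the range of `A`: the smallest projection `p`
with `p A = A`. -/
def IsRangeProjOf (E A : H →L[ℂ] H) : Prop :=
  IsProjOp E ∧ E * A = A ∧ ∀ p, IsProjOp p → p * A = A → (p - E).IsPositive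

/-- `A = V P` is the polar decomposition of `A`: `P = (A* A)^{1/2} ≥ 0`, `V` a partial isometry
whose initial projection `V* V` is the range projection of `P`. -/
def IsPolarDecomp (A V P : H →L[ℂ] H) : Prop :=
  A = V * P ∧ P.IsPositive ∧ P * P = star A * A ∧ IsPartialIsom V ∧
    IsRangeProjOf (star V * V) P

/-- An injective von Neumann algebra: the range of a norm-one idempotent (conditional
expectation) on `B(H)`. -/
def IsInjectiveVN (B : Set (H →L[ℂ] H)) : Prop :=
  ∃ Φ : (H →L[ℂ] H) →L[ℂ] (H →L[ℂ] H), ‖Φ‖ ≤ 1 ∧ (∀ x, Φ x ∈ B) ∧ ∀ x ∈ B, Φ x = x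

end VNPaper

/-- Data realizing the spatial tensor product of operators on `H₁` and `H₂` on a Hilbert
space `HT`: commuting embeddings `x ↦ x ⊗ 1`, `y ↦ 1 ⊗ y`, satisfying the commutation
theorem for generated von Neumann algebras. -/
structure VNTensorData (H₁ : Type*) (H₂ : Type*) (HT : Type*)
    [NormedAddCommGroup H₁] [InnerProductSpace ℂ H₁] [CompleteSpace H₁]
    [NormedAddCommGroup H₂] [InnerProductSpace ℂ H₂] [CompleteSpace H₂]
    [NormedAddCommGroup HT] [InnerProductSpace ℂ HT] [CompleteSpace HT] where
  e₁ : (H₁ →L[ℂ] H₁) →⋆ₐ[ℂ] (HT →L[ℂ] HT)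
  e₂ : (H₂ →L[ℂ] H₂) →⋆ₐ[ℂ] (HT →L[ℂ] HT)
  injective_e₁ : Function.Injective e₁
  injective_e₂ : Function.Injective e₂
  commute : ∀ x y, e₁ x * e₂ y = e₂ y * e₁ x
  commutation : ∀ (S₁ : Set (H₁ →L[ℂ] H₁)) (S₂ : Set (H₂ →L[ℂ] H₂)),
    Set.centralizer (e₁ '' S₁ ∪ e₂ '' S₂) =
      VNPaper.gen (e₁ '' Set.centralizer S₁ ∪ e₂ '' Set.centralizer S₂)

namespace VNTensorData

variable {H₁ H₂ HT : Type*}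
    [NormedAddCommGroup H₁] [InnerProductSpace ℂ H₁] [CompleteSpace H₁]
    [NormedAddCommGroup H₂] [InnerProductSpace ℂ H₂] [CompleteSpace H₂]
    [NormedAddCommGroup HT] [InnerProductSpace ℂ HT] [CompleteSpace HT]

/-- The von Neumann tensor product `S₁ ⊗̄ S₂` realized on `HT`. -/
def prod (D : VNTensorData H₁ H₂ HT) (S₁ : Set (H₁ →L[ℂ] H₁)) (S₂ : Set (H₂ →L[ℂ] H₂)) :
    Set (HT →L[ℂ] HT) :=
  VNPaper.gen (D.e₁ '' S₁ ∪ D.e₂ '' S₂)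

end VNTensorData


open VNPaper

variable {H : Type*} [NormedAddCommGroup H] [InnerProductSpace ℂ H] [CompleteSpace H]


set_option linter.unusedSectionVars false
open TopologicalSpace VNPaper lp

local notation "⟪" x ", " y "⟫" => @inner ℂ _ _ x y

namespace VNProofHelpers

variable {H : Type*} [NormedAddCommGroup H] [InnerProductSpace ℂ H] [CompleteSpace H]
variable {ι : Type}

theorem entry_apply (T : l2 ι H →L[ℂ] l2 ι H) (i j : ι) (h : H) :
    letI : DecidableEq ι := Classical.decEq ι
    entry T i j h = T (lp.single 2 j h) i := rfl

theorem single_zero (j : ι) :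
    letI : DecidableEq ι := Classical.decEq ι
    lp.single (E := fun _ : ι => H) 2 j (0 : H) = 0 := by
  letI : DecidableEq ι := Classical.decEq ι
  apply lp.ext
  funext k
  by_cases hk : k = j
  · subst hk; simp [lp.single_apply_self]
  · simp [lp.single_apply_ne _ _ _ hk]

theorem inner_entry (T : l2 ι H →L[ℂ] l2 ι H) (i j : ι) (g h : H) :
    letI : DecidableEq ι := Classical.decEq ι
    ⟪g, entry T i j h⟫ = ⟪lp.single 2 i g, T (lp.single 2 j h)⟫ := by
  letI : DecidableEq ι := Classical.decEq ι
  rw [lp.inner_single_left]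
  rfl

theorem entry_star (T : l2 ι H →L[ℂ] l2 ι H) (i j : ι) :
    entry (star T) i j = star (entry T j i) := by
  letI : DecidableEq ι := Classical.decEq ι
  ext h
  apply ext_inner_left ℂ
  intro g
  rw [inner_entry]
  rw [ContinuousLinearMap.star_eq_adjoint, ContinuousLinearMap.adjoint_inner_right,
    lp.inner_single_right, ← entry_apply, ContinuousLinearMap.star_eq_adjoint,
    ContinuousLinearMap.adjoint_inner_right]

theorem hasSum_inner_apply (T : l2 ι H →L[ℂ] l2 ι H) (η ζ : l2 ι H) :
    letI : DecidableEq ι := Classical.decEq ι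
    HasSum (fun q => ⟪ζ, T (lp.single 2 q (η q))⟫) ⟪ζ, T η⟫ := by
  letI : DecidableEq ι := Classical.decEq ι
  have h1 : HasSum (fun q : ι => lp.single 2 q (η q)) η :=
    lp.hasSum_single ENNReal.ofNat_ne_top η
  simpa using h1.mapL ((innerSL ℂ ζ).comp T)

theorem mem_of_hasSum_inner (N : VonNeumannAlgebra H) {J : Type} (W : J → (H →L[ℂ] H))
    (Z : H →L[ℂ] H) (hW : ∀ j, W j ∈ N)
    (hsum : ∀ g h : H, HasSum (fun j => ⟪g, W j h⟫) ⟪g, Z h⟫) :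
    Z ∈ (N : Set (H →L[ℂ] H)) := by
  rw [← N.centralizer_centralizer]
  rw [Set.mem_centralizer_iff]
  intro Y hY
  ext h
  apply ext_inner_left ℂ
  intro g
  have e1 : ∀ (A : H →L[ℂ] H) (v w : H), ⟪v, A w⟫ = ⟪star A v, w⟫ := fun A v w => by
    rw [ContinuousLinearMap.star_eq_adjoint, ContinuousLinearMap.adjoint_inner_left]
  have ha := hsum (star Y g) h
  have hb := hsum g (Y h)
  have hfun : (fun j => ⟪star Y g, W j h⟫) = fun j => ⟪g, W j (Y h)⟫ := by
    funext j
    rw [← e1 Y g (W j h)]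
    have hc : Y * W j = W j * Y := (hY (W j) (hW j)).symm
    have : Y (W j h) = W j (Y h) := by
      calc Y (W j h) = (Y * W j) h := rfl
        _ = (W j * Y) h := by rw [hc]
        _ = W j (Y h) := rfl
    rw [this]
  rw [hfun] at ha
  have hval : ⟪star Y g, Z h⟫ = ⟪g, Z (Y h)⟫ := ha.unique hb
  calc ⟪g, (Y * Z) h⟫ = ⟪g, Y (Z h)⟫ := rfl
    _ = ⟪star Y g, Z h⟫ := e1 Y g (Z h)
    _ = ⟪g, Z (Y h)⟫ := hval
    _ = ⟪g, (Z * Y) h⟫ := rfl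

theorem entry_conj_mem (N : VonNeumannAlgebra H) (V T : l2 ι H →L[ℂ] l2 ι H)
    (hT : ∀ p q : ι, entry T p q ∈ N)
    (hV : ∀ X ∈ N, ∀ i j k l : ι, entry V i j * X * star (entry V k l) ∈ N)
    (i k : ι) : entry (V * T * star V) i k ∈ (N : Set (H →L[ℂ] H)) := by
  letI : DecidableEq ι := Classical.decEq ι
  set S : ι → (H →L[ℂ] H) := fun q => entry (V * T) i q * star (entry V k q) with hS
  have key : ∀ (q : ι) (g h : H),
      ⟪g, S q h⟫ = ⟪lp.single 2 i g, (V * T) (lp.single 2 q (star (entry V k q) h))⟫ := by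
    intro q g h
    calc ⟪g, S q h⟫ = ⟪g, entry (V * T) i q (star (entry V k q) h)⟫ := rfl
      _ = _ := inner_entry _ _ _ _ _
  have hSmem : ∀ q, S q ∈ (N : Set (H →L[ℂ] H)) := by
    intro q
    apply mem_of_hasSum_inner N
      (fun p => entry V i p * entry T p q * star (entry V k q)) (S q)
      (fun p => hV (entry T p q) (hT p q) i p k q)
    intro g h
    set a : H := star (entry V k q) h with ha
    have h1 := lp.hasSum_inner (𝕜 := ℂ) ((star V) (lp.single 2 i g)) (T (lp.single 2 q a))
    have hfun : (fun p => ⟪((star V) (lp.single 2 i g)) p, (T (lp.single 2 q a)) p⟫)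
        = fun p => ⟪g, (entry V i p * entry T p q * star (entry V k q)) h⟫ := by
      funext p
      have e1 : ((star V) (lp.single 2 i g)) p = star (entry V i p) g := by
        rw [← entry_apply, entry_star]
      have e2 : (T (lp.single 2 q a)) p = entry T p q a := rfl
      rw [e1, e2, ContinuousLinearMap.star_eq_adjoint,
        ContinuousLinearMap.adjoint_inner_left]
      rfl
    have hval : ⟪(star V) (lp.single 2 i g), T (lp.single 2 q a)⟫ = ⟪g, S q h⟫ := by
      rw [key q g h]
      rw [ContinuousLinearMap.star_eq_adjoint, ContinuousLinearMap.adjoint_inner_left]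
      rfl
    rw [hfun, hval] at h1
    exact h1
  apply mem_of_hasSum_inner N S _ hSmem
  intro g h
  have hA := hasSum_inner_apply (V * T) ((star V) (lp.single 2 k h)) (lp.single 2 i g)
  have hfun : (fun q => ⟪lp.single 2 i g,
        (V * T) (lp.single 2 q (((star V) (lp.single 2 k h)) q))⟫)
      = fun q => ⟪g, S q h⟫ := by
    funext q
    have e1 : ((star V) (lp.single 2 k h)) q = star (entry V k q) h := by
      rw [← entry_apply, entry_star]
    rw [e1, key q g h]
  have hval : ⟪lp.single 2 i g, (V * T) ((star V) (lp.single 2 k h))⟫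
      = ⟪g, entry (V * T * star V) i k h⟫ := by
    rw [inner_entry]
    rfl
  rw [hfun, hval] at hA
  exact hA



/-- Coordinate evaluation as a continuous linear map. -/
def evalCLM (l : ι) : l2 ι H →L[ℂ] H :=
  LinearMap.mkContinuous
    { toFun := fun ξ => ξ l
      map_add' := fun a b => by dsimp only; rw [lp.coeFn_add]; rfl
      map_smul' := fun c a => by dsimp only; rw [lp.coeFn_smul]; rfl }
    1 (fun ξ => by simpa using lp.norm_apply_le_norm (by norm_num) ξ l)

/-- `lp.single` as a continuous linear map. -/
def singleCLM (j : ι) : H →L[ℂ] l2 ι H :=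
  letI : DecidableEq ι := Classical.decEq ι
  LinearMap.mkContinuous
    { toFun := fun h => lp.single 2 j h
      map_add' := fun a b => by
        apply lp.ext
        funext k
        by_cases hk : k = j
        · subst hk; simp [lp.single_apply_self]
        · simp [lp.single_apply_ne _ _ _ hk]
      map_smul' := fun c a => by simpa using lp.single_smul 2 j a c }
    1 (fun h => by simpa using (lp.norm_single (p := 2) (by norm_num) (fun _ => h) j).le)

/-- The operator with single nonzero matrix entry `X` at `(j, l)`. -/
def singleOp (j l : ι) (X : H →L[ℂ] H) : l2 ι H →L[ℂ] l2 ι H :=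
  (singleCLM j).comp (X.comp (evalCLM l))

theorem singleOp_apply (j l : ι) (X : H →L[ℂ] H) (ξ : l2 ι H) :
    letI : DecidableEq ι := Classical.decEq ι
    singleOp j l X ξ = lp.single 2 j (X (ξ l)) := rfl

theorem singleOp_mem (N : VonNeumannAlgebra H) (j l : ι) (X : H →L[ℂ] H) (hX : X ∈ N) :
    ∀ p q : ι, entry (singleOp j l X) p q ∈ N := by
  letI : DecidableEq ι := Classical.decEq ι
  intro p q
  by_cases hq : l = q
  · subst hq
    by_cases hp : p = j
    · subst hp
      have : entry (singleOp p l X) p l = X := by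
        ext h
        rw [entry_apply, singleOp_apply, lp.single_apply_self, lp.single_apply_self]
      rw [this]; exact hX
    · have : entry (singleOp j l X) p l = 0 := by
        ext h
        rw [entry_apply, singleOp_apply, lp.single_apply_self,
          lp.single_apply_ne _ _ _ hp]
        rfl
      rw [this]; exact zero_mem N.toStarSubalgebra
  · have : entry (singleOp j l X) p q = 0 := by
      ext h
      rw [entry_apply, singleOp_apply, lp.single_apply_ne _ _ _ hq,
        map_zero, single_zero]
      rfl
    rw [this]; exact zero_mem N.toStarSubalgebra

theorem conj_singleOp_entry (V : l2 ι H →L[ℂ] l2 ι H) (X : H →L[ℂ] H) (i j k l : ι) :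
    entry (V * singleOp j l X * star V) i k = entry V i j * X * star (entry V k l) := by
  letI : DecidableEq ι := Classical.decEq ι
  ext h
  rw [entry_apply]
  have e0 : (V * singleOp j l X * star V) (lp.single 2 k h)
      = V (singleOp j l X ((star V) (lp.single 2 k h))) := rfl
  rw [e0, singleOp_apply]
  have e1 : ((star V) (lp.single 2 k h)) l = star (entry V k l) h := by
    rw [← entry_apply, entry_star]
  rw [e1, ← entry_apply]
  rfl

end VNProofHelpers

/-- A unitary `U = (A_{ij})` in `M ⊗̄ B(K)` normalizes `N ⊗̄ B(K)` iff
`A_{ij} X A_{kl}* ∈ N` and `A_{ij}* X A_{kl} ∈ N` for all `X ∈ N` and all entries. -/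
theorem unitary_normalizes_tensorB_iff (M N : VonNeumannAlgebra H)
    (hNM : (N : Set (H →L[ℂ] H)) ⊆ M) (ι : Type)
    (U : l2 ι H →L[ℂ] l2 ι H)
    (hU : U ∈ tensorB (M : Set (H →L[ℂ] H)) ι) (hUu : IsUnitaryOp U) :
    conjSet U (tensorB (N : Set (H →L[ℂ] H)) ι) = tensorB (N : Set (H →L[ℂ] H)) ι ↔
      ∀ X ∈ N, ∀ i j k l : ι,
        entry U i j * X * star (entry U k l) ∈ N ∧
        star (entry U i j) * X * entry U k l ∈ N := by
  open VNProofHelpers in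
  constructor
  · intro hconj X hX i j k l
    have hmem : ∀ a b : ι,
        U * singleOp a b X * star U ∈ tensorB (N : Set (H →L[ℂ] H)) ι := by
      intro a b
      rw [← hconj]
      exact ⟨_, singleOp_mem N a b X hX, rfl⟩
    have hmem' : ∀ a b : ι,
        star U * singleOp a b X * U ∈ tensorB (N : Set (H →L[ℂ] H)) ι := by
      intro a b
      have hE : singleOp a b X ∈ tensorB (N : Set (H →L[ℂ] H)) ι := singleOp_mem N a b X hX
      rw [← hconj] at hE
      obtain ⟨F, hF, hFe⟩ := hE
      have heq : star U * singleOp a b X * U = F := by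
        rw [← hFe]
        simp only [← mul_assoc]
        rw [hUu.2, one_mul, mul_assoc, hUu.2, mul_one]
      rw [heq]
      exact hF
    constructor
    · have h2 : entry (U * singleOp j l X * star U) i k ∈ (N : Set (H →L[ℂ] H)) :=
        hmem j l i k
      rwa [conj_singleOp_entry] at h2
    · have h2 : entry (star U * singleOp i k X * star (star U)) j l
          ∈ (N : Set (H →L[ℂ] H)) := by
        rw [star_star]
        exact hmem' i k j l
      rw [conj_singleOp_entry, entry_star, entry_star, star_star] at h2
      exact h2
  · intro hcond
    apply Set.Subset.antisymm
    · rintro W ⟨T, hT, rfl⟩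
      intro p q
      exact entry_conj_mem N U T hT (fun X hX a b c d => (hcond X hX a b c d).1) p q
    · intro T hT
      refine ⟨star U * T * U, ?_, ?_⟩
      · intro p q
        have hV : ∀ X ∈ N, ∀ a b c d : ι,
            entry (star U) a b * X * star (entry (star U) c d) ∈ N := by
          intro X hX a b c d
          rw [entry_star, entry_star, star_star]
          exact (hcond X hX b a d c).2
        have h3 := entry_conj_mem N (star U) T hT hV p q
        rwa [star_star] at h3
      · show U * (star U * T * U) * star U = T
        simp only [← mul_assoc]
        rw [hUu.1, one_mul, mul_assoc, hUu.1, mul_one]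
end
end

section
/- Let N ⊆ M ⊆ B(H). If every automorphism θ of the commutant N′ that fixes M′ pointwise must fix N′ pointwise, then N is completely singular in M: for any Hilbert space K and any unitary U ∈ M ⊗̄ B(K) with U(N ⊗̄ B(K))U* = N ⊗̄ B(K), we have U ∈ N ⊗̄ B(K). -/
open TopologicalSpace

noncomputable section

open VNPaper

namespace CSAux

open scoped ENNReal

attribute [local instance] Classical.decEq

variable {H : Type*} [NormedAddCommGroup H] [InnerProductSpace ℂ H] [CompleteSpace H]
variable {ι : Type*}

theorem two_ne_top : (2 : ℝ≥0∞) ≠ ⊤ := by norm_num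

theorem toReal_two_pos : (0 : ℝ) < (2 : ℝ≥0∞).toReal := by norm_num

theorem memℓp_comp (x : H →L[ℂ] H) (f : l2 ι H) : Memℓp (fun i => x (f i)) 2 := by
  have hf : Summable (fun i => ‖f i‖ ^ (2 : ℝ≥0∞).toReal) :=
    (lp.memℓp f).summable toReal_two_pos
  apply memℓp_gen
  refine Summable.of_nonneg_of_le (fun i => Real.rpow_nonneg (norm_nonneg _) _)
    (fun i => ?_) (hf.mul_left (‖x‖ ^ (2 : ℝ≥0∞).toReal))
  calc ‖x (f i)‖ ^ (2 : ℝ≥0∞).toReal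
      ≤ (‖x‖ * ‖f i‖) ^ (2 : ℝ≥0∞).toReal :=
        Real.rpow_le_rpow (norm_nonneg _) (x.le_opNorm _) toReal_two_pos.le
    _ = ‖x‖ ^ (2 : ℝ≥0∞).toReal * ‖f i‖ ^ (2 : ℝ≥0∞).toReal :=
        Real.mul_rpow (norm_nonneg _) (norm_nonneg _)

/-- The amplification `x ⊗ 1` acting diagonally on `ℓ²(ι, H)`. -/
def ampl (x : H →L[ℂ] H) : l2 ι H →L[ℂ] l2 ι H :=
  LinearMap.mkContinuous
    { toFun := fun f => ⟨fun i => x (f i), memℓp_comp x f⟩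
      map_add' := fun f g => by
        apply lp.ext
        funext i
        simp only [lp.coeFn_add, Pi.add_apply]
        exact map_add x _ _
      map_smul' := fun c f => by
        apply lp.ext
        funext i
        simp only [lp.coeFn_smul, Pi.smul_apply, RingHom.id_apply]
        exact map_smul x c _ }
    ‖x‖
    (fun f => by
      apply lp.norm_le_of_tsum_le toReal_two_pos (by positivity)
      have h1 : ∀ i, ‖x (f i)‖ ^ (2 : ℝ≥0∞).toReal
          ≤ ‖x‖ ^ (2 : ℝ≥0∞).toReal * ‖f i‖ ^ (2 : ℝ≥0∞).toReal := by
        intro i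
        calc ‖x (f i)‖ ^ (2 : ℝ≥0∞).toReal
            ≤ (‖x‖ * ‖f i‖) ^ (2 : ℝ≥0∞).toReal :=
              Real.rpow_le_rpow (norm_nonneg _) (x.le_opNorm _) toReal_two_pos.le
          _ = _ := Real.mul_rpow (norm_nonneg _) (norm_nonneg _)
      have hs : Summable (fun i => ‖f i‖ ^ (2 : ℝ≥0∞).toReal) :=
        (lp.memℓp f).summable toReal_two_pos
      calc (∑' i, ‖x (f i)‖ ^ (2 : ℝ≥0∞).toReal)
          ≤ ∑' i, ‖x‖ ^ (2 : ℝ≥0∞).toReal * ‖f i‖ ^ (2 : ℝ≥0∞).toReal := by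
            apply Summable.tsum_le_tsum h1 _ (hs.mul_left _)
            exact (memℓp_comp x f).summable toReal_two_pos
        _ = ‖x‖ ^ (2 : ℝ≥0∞).toReal * ∑' i, ‖f i‖ ^ (2 : ℝ≥0∞).toReal := tsum_mul_left
        _ = ‖x‖ ^ (2 : ℝ≥0∞).toReal * ‖f‖ ^ (2 : ℝ≥0∞).toReal := by
            rw [lp.norm_rpow_eq_tsum toReal_two_pos]
        _ = (‖x‖ * ‖f‖) ^ (2 : ℝ≥0∞).toReal :=
            (Real.mul_rpow (norm_nonneg _) (norm_nonneg _)).symm)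

@[simp] theorem ampl_apply (x : H →L[ℂ] H) (f : l2 ι H) (i : ι) :
    (ampl x f) i = x (f i) := rfl

theorem ext_single {T S : l2 ι H →L[ℂ] l2 ι H}
    (h : ∀ (j : ι) (a : H), T (lp.single 2 j a) = S (lp.single 2 j a)) : T = S := by
  refine ContinuousLinearMap.ext fun f => ?_
  have hT := (lp.hasSum_single two_ne_top f).mapL T
  have hS := (lp.hasSum_single two_ne_top f).mapL S
  simp only [h] at hT
  exact hT.unique hS

theorem entry_apply (T : l2 ι H →L[ℂ] l2 ι H) (i j : ι) (a : H) :
    entry T i j a = T (lp.single 2 j a) i := rfl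

theorem ext_entry {T S : l2 ι H →L[ℂ] l2 ι H}
    (h : ∀ i j, entry T i j = entry S i j) : T = S := by
  apply ext_single
  intro j a
  apply lp.ext
  funext i
  exact DFunLike.congr_fun (h i j) a

theorem ampl_single (x : H →L[ℂ] H) (j : ι) (a : H) :
    ampl x (lp.single 2 j a) = lp.single 2 j (x a) := by
  apply lp.ext
  funext i
  by_cases hij : i = j
  · subst hij
    simp only [ampl_apply, lp.single_apply_self]
  · simp only [ampl_apply, lp.single_apply_ne _ _ _ hij, map_zero]

theorem entry_ampl_self (x : H →L[ℂ] H) (i : ι) :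
    entry (ampl x : l2 ι H →L[ℂ] l2 ι H) i i = x := by
  ext a
  rw [entry_apply, ampl_single, lp.single_apply_self]

theorem entry_ampl_ne (x : H →L[ℂ] H) {i j : ι} (hij : i ≠ j) :
    entry (ampl x : l2 ι H →L[ℂ] l2 ι H) i j = 0 := by
  ext a
  rw [entry_apply, ampl_single, lp.single_apply_ne _ _ _ hij]
  rfl

theorem entry_ampl_mul (y : H →L[ℂ] H) (T : l2 ι H →L[ℂ] l2 ι H) (i j : ι) :
    entry (ampl y * T) i j = y * entry T i j := rfl

theorem entry_mul_ampl (y : H →L[ℂ] H) (T : l2 ι H →L[ℂ] l2 ι H) (i j : ι) :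
    entry (T * ampl y) i j = entry T i j * y := by
  ext a
  show T (ampl y (lp.single 2 j a)) i = T (lp.single 2 j (y a)) i
  rw [ampl_single]

theorem ampl_injective [Nonempty ι] :
    Function.Injective (ampl : (H →L[ℂ] H) → l2 ι H →L[ℂ] l2 ι H) := by
  intro x y h
  have i : ι := Classical.arbitrary ι
  have := congrArg (fun T => entry T i i) h
  simpa only [entry_ampl_self] using this

theorem ampl_mul (x y : H →L[ℂ] H) :
    (ampl (x * y) : l2 ι H →L[ℂ] l2 ι H) = ampl x * ampl y := by
  refine ContinuousLinearMap.ext fun f => lp.ext (funext fun i => ?_)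
  rfl

theorem ampl_add (x y : H →L[ℂ] H) :
    (ampl (x + y) : l2 ι H →L[ℂ] l2 ι H) = ampl x + ampl y := by
  refine ContinuousLinearMap.ext fun f => lp.ext (funext fun i => ?_)
  simp only [ampl_apply, ContinuousLinearMap.add_apply, lp.coeFn_add, Pi.add_apply]

theorem ampl_smul (c : ℂ) (x : H →L[ℂ] H) :
    (ampl (c • x) : l2 ι H →L[ℂ] l2 ι H) = c • ampl x := by
  refine ContinuousLinearMap.ext fun f => lp.ext (funext fun i => ?_)
  simp only [ampl_apply, ContinuousLinearMap.smul_apply, lp.coeFn_smul, Pi.smul_apply]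

theorem star_ampl (x : H →L[ℂ] H) :
    star (ampl x : l2 ι H →L[ℂ] l2 ι H) = ampl (star x) := by
  rw [ContinuousLinearMap.star_eq_adjoint]
  symm
  rw [ContinuousLinearMap.eq_adjoint_iff]
  intro f g
  rw [lp.inner_eq_tsum, lp.inner_eq_tsum]
  congr 1
  funext i
  show inner ℂ ((star x) (f i)) (g i) = inner ℂ (f i) (x (g i))
  rw [ContinuousLinearMap.star_eq_adjoint, ContinuousLinearMap.adjoint_inner_left]

set_option maxHeartbeats 1000000 in
/-- The matrix unit `1 ⊗ e_{kl}` on `ℓ²(ι, H)`. -/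
def eunit (k l : ι) : l2 ι H →L[ℂ] l2 ι H :=
  LinearMap.mkContinuous
    { toFun := fun f => lp.single 2 k (f l)
      map_add' := fun f g => by
        apply lp.ext
        funext i
        by_cases hik : i = k
        · subst hik
          simp only [lp.coeFn_add, Pi.add_apply, lp.single_apply_self]
        · simp only [lp.coeFn_add, Pi.add_apply, lp.single_apply_ne _ _ _ hik, add_zero]
      map_smul' := fun c f => by
        apply lp.ext
        funext i
        by_cases hik : i = k
        · subst hik
          simp only [lp.coeFn_smul, Pi.smul_apply, lp.single_apply_self, RingHom.id_apply]
        · simp only [lp.coeFn_smul, Pi.smul_apply, lp.single_apply_ne _ _ _ hik,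
            RingHom.id_apply, smul_zero] }
    1
    (fun f => by
      rw [one_mul]
      have h1 : ‖(lp.single 2 k (f l) : l2 ι H)‖ = ‖f l‖ :=
        lp.norm_single (E := fun _ : ι => H) (p := 2) (by norm_num) k (f l)
      show ‖(lp.single 2 k (f l) : l2 ι H)‖ ≤ ‖f‖
      rw [h1]
      exact lp.norm_apply_le_norm (by norm_num) f l)

theorem eunit_apply (k l : ι) (f : l2 ι H) : eunit k l f = lp.single 2 k (f l) := rfl

theorem eunit_single_self (k l : ι) (a : H) :
    eunit k l (lp.single 2 l a : l2 ι H) = lp.single 2 k a := by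
  rw [eunit_apply, lp.single_apply_self]

theorem eunit_single_ne (k l : ι) {j : ι} (hj : j ≠ l) (a : H) :
    eunit k l (lp.single 2 j a : l2 ι H) = 0 := by
  have h0 : (lp.single 2 j a : l2 ι H) l = 0 := lp.single_apply_ne (E := fun _ : ι => H) 2 j a (Ne.symm hj)
  rw [eunit_apply, h0]
  apply lp.ext
  funext i
  by_cases hik : i = k
  · subst hik
    rw [lp.single_apply_self]
    exact (congrFun (lp.coeFn_zero (fun _ : ι => H) 2) i).symm
  · rw [lp.single_apply_ne _ _ _ hik]
    exact (congrFun (lp.coeFn_zero (fun _ : ι => H) 2) i).symm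

theorem entry_eunit (k l i j : ι) :
    entry (eunit k l : l2 ι H →L[ℂ] l2 ι H) i j =
      if i = k ∧ j = l then 1 else 0 := by
  ext a
  rw [entry_apply]
  by_cases hj : j = l
  · subst hj
    rw [eunit_single_self]
    by_cases hi : i = k
    · subst hi
      rw [lp.single_apply_self, if_pos ⟨rfl, rfl⟩]
      rfl
    · rw [lp.single_apply_ne _ _ _ hi, if_neg (by tauto)]
      rfl
  · rw [eunit_single_ne _ _ hj]
    rw [if_neg (by tauto)]
    rfl

theorem eunit_mem_tensorB (A : VonNeumannAlgebra H) (k l : ι) :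
    (eunit k l : l2 ι H →L[ℂ] l2 ι H) ∈ tensorB (A : Set (H →L[ℂ] H)) ι := by
  intro i j
  rw [entry_eunit]
  by_cases h : i = k ∧ j = l
  · rw [if_pos h]
    exact one_mem A
  · rw [if_neg h]
    exact zero_mem A

theorem ampl_mem_tensorB (A : VonNeumannAlgebra H) {x : H →L[ℂ] H} (hx : x ∈ A) :
    (ampl x : l2 ι H →L[ℂ] l2 ι H) ∈ tensorB (A : Set (H →L[ℂ] H)) ι := by
  intro i j
  by_cases hij : i = j
  · subst hij
    rw [entry_ampl_self]
    exact hx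
  · rw [entry_ampl_ne _ hij]
    exact zero_mem A

theorem tensorB_comm (A : VonNeumannAlgebra H) {T : l2 ι H →L[ℂ] l2 ι H}
    (hT : T ∈ tensorB (A : Set (H →L[ℂ] H)) ι) {y : H →L[ℂ] H}
    (hy : y ∈ A.commutant) : ampl y * T = T * ampl y := by
  apply ext_entry
  intro i j
  rw [entry_ampl_mul, entry_mul_ampl]
  exact (VonNeumannAlgebra.mem_commutant_iff.mp hy _ (hT i j)).symm

theorem mem_tensorB_of_comm (A : VonNeumannAlgebra H) {T : l2 ι H →L[ℂ] l2 ι H}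
    (h : ∀ y ∈ A.commutant, ampl y * T = T * ampl y) :
    T ∈ tensorB (A : Set (H →L[ℂ] H)) ι := by
  intro i j
  have hmem : entry T i j ∈ A.commutant.commutant := by
    rw [VonNeumannAlgebra.mem_commutant_iff]
    intro y hy
    have := congrArg (fun S => entry S i j) (h y hy)
    simpa only [entry_ampl_mul, entry_mul_ampl] using this
  rwa [VonNeumannAlgebra.commutant_commutant] at hmem

theorem comm_tensorB_exists [Nonempty ι] (A : VonNeumannAlgebra H)
    {T : l2 ι H →L[ℂ] l2 ι H}
    (h : ∀ X ∈ tensorB (A : Set (H →L[ℂ] H)) ι, T * X = X * T) :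
    ∃ t ∈ A.commutant, T = ampl t := by
  have key : ∀ (k l i : ι) (a : H),
      entry T i k a = if i = k then entry T l l a else 0 := by
    intro k l i a
    have h1 := congrArg (fun S => S (lp.single 2 l a) i)
      (h (eunit k l) (eunit_mem_tensorB A k l))
    simp only [ContinuousLinearMap.mul_apply] at h1
    rw [eunit_single_self] at h1
    -- h1 : T (lp.single 2 k a) i = (eunit k l (T (lp.single 2 l a))) i
    rw [eunit_apply] at h1
    by_cases hik : i = k
    · subst hik
      rw [lp.single_apply_self] at h1
      rw [if_pos rfl, entry_apply, entry_apply, h1]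
    · rw [lp.single_apply_ne _ _ _ hik] at h1
      rw [if_neg hik, entry_apply, h1]
  let i₀ : ι := Classical.arbitrary ι
  set t := entry T i₀ i₀ with ht
  have hTe : T = ampl t := by
    apply ext_entry
    intro i j
    by_cases hij : i = j
    · subst hij
      rw [entry_ampl_self]
      ext a
      have := key i i₀ i a
      rwa [if_pos rfl] at this
    · rw [entry_ampl_ne _ hij]
      ext a
      have := key j i₀ i a
      rwa [if_neg hij] at this
  refine ⟨t, ?_, hTe⟩
  rw [VonNeumannAlgebra.mem_commutant_iff]
  intro x hx
  have hcomm := h (ampl x) (ampl_mem_tensorB A hx)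
  have := congrArg (fun S => entry S i₀ i₀) hcomm
  simpa only [entry_mul_ampl, entry_ampl_mul, ← ht] using this.symm

end CSAux

open CSAux

variable {H : Type*} [NormedAddCommGroup H] [InnerProductSpace ℂ H] [CompleteSpace H]

/-- If every automorphism of `N'` fixing `M'` pointwise is the identity on `N'`, then `N` is
completely singular in `M` (no separability needed). -/
theorem completelySingular_of_aut_fix
    (M N : VonNeumannAlgebra H) (hNM : (N : Set (H →L[ℂ] H)) ⊆ M)
    (haut : ∀ θ : N.commutant.toStarSubalgebra ≃⋆ₐ[ℂ] N.commutant.toStarSubalgebra,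
      (∀ x : N.commutant.toStarSubalgebra,
        (x : H →L[ℂ] H) ∈ M.commutant → ((θ x : H →L[ℂ] H) = x)) →
      ∀ x : N.commutant.toStarSubalgebra, ((θ x : H →L[ℂ] H) = x)) :
    CompletelySingularIn (N : Set (H →L[ℂ] H)) (M : Set (H →L[ℂ] H)) := by
  intro ι U hUM hUuni hUN
  by_cases hι : Nonempty ι
  swap
  · intro i j
    exact absurd ⟨i⟩ hι
  haveI := hι
  obtain ⟨hU1, hU2⟩ := hUuni
  -- conjugation maps `tensorB N` into itself, in both directions
  have hconj : ∀ X ∈ tensorB (N : Set (H →L[ℂ] H)) ι,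
      U * X * star U ∈ tensorB (N : Set (H →L[ℂ] H)) ι := by
    intro X hX
    rw [← hUN]
    exact ⟨X, hX, rfl⟩
  have hconj' : ∀ X ∈ tensorB (N : Set (H →L[ℂ] H)) ι,
      star U * X * U ∈ tensorB (N : Set (H →L[ℂ] H)) ι := by
    intro X hX
    rw [← hUN] at hX
    obtain ⟨Y, hY, rfl⟩ := hX
    have : star U * (U * Y * star U) * U = Y := by
      simp only [← mul_assoc]
      rw [hU2, one_mul, mul_assoc, hU2, mul_one]
    rwa [this]
  -- conjugation by a unitary commuting (after conjugation) with `tensorB N`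
  have conj_comm : ∀ (a : l2 ι H →L[ℂ] l2 ι H),
      (∀ X ∈ tensorB (N : Set (H →L[ℂ] H)) ι, a * (star U * X * U) = (star U * X * U) * a) →
      ∀ X ∈ tensorB (N : Set (H →L[ℂ] H)) ι,
        (U * a * star U) * X = X * (U * a * star U) := by
    intro a ha X hX
    have h2 := congrArg (fun Z => U * Z * star U) (ha X hX)
    simp only [← mul_assoc] at h2 ⊢
    -- h2 : U * a * star U * X * U * star U = U * star U * X * U * a * star U
    rw [mul_assoc (U * a * star U * X) U (star U), hU1, mul_one] at h2
    rwa [one_mul] at h2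
  have conj_comm' : ∀ (a : l2 ι H →L[ℂ] l2 ι H),
      (∀ X ∈ tensorB (N : Set (H →L[ℂ] H)) ι, a * (U * X * star U) = (U * X * star U) * a) →
      ∀ X ∈ tensorB (N : Set (H →L[ℂ] H)) ι,
        (star U * a * U) * X = X * (star U * a * U) := by
    intro a ha X hX
    have h2 := congrArg (fun Z => star U * Z * U) (ha X hX)
    simp only [← mul_assoc] at h2 ⊢
    rw [mul_assoc (star U * a * U * X) (star U) U, hU2, mul_one] at h2
    rwa [one_mul] at h2
  -- the forward map on N'
  have main : ∀ y ∈ N.commutant, ∃ t ∈ N.commutant,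
      U * ampl y * star U = (ampl t : l2 ι H →L[ℂ] l2 ι H) := by
    intro y hy
    obtain ⟨t, ht, hte⟩ := comm_tensorB_exists N (T := U * ampl y * star U)
      (conj_comm (ampl y) (fun X hX => tensorB_comm N (hconj' X hX) hy) )
    exact ⟨t, ht, hte⟩
  have main' : ∀ y ∈ N.commutant, ∃ t ∈ N.commutant,
      star U * ampl y * U = (ampl t : l2 ι H →L[ℂ] l2 ι H) := by
    intro y hy
    obtain ⟨t, ht, hte⟩ := comm_tensorB_exists N (T := star U * ampl y * U)
      (conj_comm' (ampl y) (fun X hX => tensorB_comm N (hconj X hX) hy) )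
    exact ⟨t, ht, hte⟩
  choose t ht hampl using main
  choose s hs hampl' using main'
  -- construct the automorphism θ of N'
  have hst : ∀ (y : H →L[ℂ] H) (hy : y ∈ N.commutant) (hy2 : t y hy ∈ N.commutant),
      s (t y hy) hy2 = y := by
    intro y hy hy2
    apply ampl_injective (ι := ι)
    rw [← hampl', ← hampl]
    simp only [← mul_assoc]
    rw [hU2, one_mul, mul_assoc, hU2, mul_one]
  have hts : ∀ (y : H →L[ℂ] H) (hy : y ∈ N.commutant) (hy2 : s y hy ∈ N.commutant),
      t (s y hy) hy2 = y := by
    intro y hy hy2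
    apply ampl_injective (ι := ι)
    rw [← hampl, ← hampl']
    simp only [← mul_assoc]
    rw [hU1, one_mul, mul_assoc, hU1, mul_one]
  have key_mul : ∀ (a b : H →L[ℂ] H) (ha : a ∈ N.commutant) (hb : b ∈ N.commutant)
      (hab : a * b ∈ N.commutant), t (a * b) hab = t a ha * t b hb := by
    intro a b ha hb hab
    apply ampl_injective (ι := ι)
    rw [ampl_mul, ← hampl, ← hampl, ← hampl, ampl_mul]
    simp only [← mul_assoc]
    rw [mul_assoc (U * ampl a) (star U) U, hU2, mul_one]
  have key_add : ∀ (a b : H →L[ℂ] H) (ha : a ∈ N.commutant) (hb : b ∈ N.commutant)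
      (hab : a + b ∈ N.commutant), t (a + b) hab = t a ha + t b hb := by
    intro a b ha hb hab
    apply ampl_injective (ι := ι)
    rw [ampl_add, ← hampl, ← hampl, ← hampl, ampl_add, mul_add, add_mul]
  have key_smul : ∀ (c : ℂ) (a : H →L[ℂ] H) (ha : a ∈ N.commutant)
      (hca : c • a ∈ N.commutant), t (c • a) hca = c • t a ha := by
    intro c a ha hca
    apply ampl_injective (ι := ι)
    rw [ampl_smul, ← hampl, ← hampl, ampl_smul, mul_smul_comm, smul_mul_assoc]
  have key_star : ∀ (a : H →L[ℂ] H) (ha : a ∈ N.commutant)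
      (hsa : star a ∈ N.commutant), t (star a) hsa = star (t a ha) := by
    intro a ha hsa
    apply ampl_injective (ι := ι)
    rw [← hampl (star a) hsa]
    rw [show (ampl (star (t a ha)) : l2 ι H →L[ℂ] l2 ι H) = star (ampl (t a ha)) from
      (star_ampl _).symm]
    rw [← hampl a ha]
    simp only [star_mul, star_star, star_ampl, mul_assoc]
  let θ : N.commutant.toStarSubalgebra ≃⋆ₐ[ℂ] N.commutant.toStarSubalgebra :=
    { toFun := fun x => ⟨t x.1 x.2, ht x.1 x.2⟩
      invFun := fun x => ⟨s x.1 x.2, hs x.1 x.2⟩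
      left_inv := fun x => Subtype.ext (hst x.1 x.2 _)
      right_inv := fun x => Subtype.ext (hts x.1 x.2 _)
      map_mul' := fun x y => Subtype.ext (key_mul x.1 y.1 x.2 y.2 (x * y).2)
      map_add' := fun x y => Subtype.ext (key_add x.1 y.1 x.2 y.2 (x + y).2)
      map_smul' := fun c x => Subtype.ext (key_smul c x.1 x.2 (c • x).2)
      map_star' := fun x => Subtype.ext (key_star x.1 x.2 (star x).2) }
  -- θ fixes M'
  have hfix : ∀ x : N.commutant.toStarSubalgebra,
      (x : H →L[ℂ] H) ∈ M.commutant → ((θ x : H →L[ℂ] H) = x) := by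
    intro x hxM
    show t x.1 x.2 = x.1
    apply ampl_injective (ι := ι)
    rw [← hampl]
    have hcomm : ampl x.1 * U = U * (ampl x.1 : l2 ι H →L[ℂ] l2 ι H) :=
      tensorB_comm M hUM hxM
    rw [← hcomm, mul_assoc, hU1, mul_one]
  -- conclude θ = id on N', hence U commutes with ampl(N')
  have hid := haut θ hfix
  apply mem_tensorB_of_comm N
  intro y hy
  have h1 : t y hy = y := hid ⟨y, hy⟩
  have h2 : U * ampl y * star U = (ampl y : l2 ι H →L[ℂ] l2 ι H) := by
    rw [hampl y hy, h1]
  calc (ampl y : l2 ι H →L[ℂ] l2 ι H) * U = U * ampl y * star U * U := by rw [h2]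
    _ = U * ampl y := by rw [mul_assoc, hU2, mul_one]
end
end
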